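/- Suppose λ ∈ (1/2, 1) and there exist C₁ > 0 and ε ∈ (0,1) such that the Bernoulli convolution measure ν_λ satisfies ν_λ(B(x,r)) ≤ C₁ r^{1-ε} for all x ∈ [0,1] and r > 0. Then for any ρ > 0 there is a constant C > 0 such that for all x ∈ [0,1] and k ∈ ℕ, the number of words i ∈ {0,1}^k for which π_I([i]) intersects [x − ρλ^k, x + ρλ^k] is at most C·2^k·λ^{k(1−ε)}. -/
import Mathlib


open MeasureTheory Filter Set Real

/-- Projection to the x-coordinate: coding map of the IFS {x ↦ λx, x ↦ λx + (1-λ)}. -/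
noncomputable def piI (lam : ℝ) (i : ℕ → Fin 2) : ℝ :=
  ∑' n : ℕ, ((i n : ℕ) : ℝ) * (1 - lam) * lam ^ n

/-- Coding map of the Przytycki–Urbański IFS f₀(x,y)=(λx,y/2), f₁(x,y)=(λx+1-λ, y/2+1/2). -/
noncomputable def piPU (lam : ℝ) (i : ℕ → Fin 2) : ℝ × ℝ :=
  (piI lam i, ∑' n : ℕ, ((i n : ℕ) : ℝ) * (1 / 2 : ℝ) ^ (n + 1))

/-- Binary digits of a real number: under Lebesgue measure on [0,1) these are
i.i.d. fair coin flips. -/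
noncomputable def digitSeq (x : ℝ) (n : ℕ) : Fin 2 :=
  if ⌊x * 2 ^ (n + 1)⌋ % 2 = 1 then 1 else 0

/-- The (1/2,1/2)-Bernoulli measure on {0,1}^ℕ. -/
noncomputable def bern : Measure (ℕ → Fin 2) :=
  Measure.map digitSeq (volume.restrict (Set.Ico (0 : ℝ) 1))

/-- The Bernoulli convolution ν_λ: push-forward of the Bernoulli measure under π_I. -/
noncomputable def nuLam (lam : ℝ) : Measure ℝ := Measure.map (piI lam) bern

section Aux

variable {lam : ℝ}

lemma term_nonneg (h0 : 0 ≤ lam) (h1 : lam ≤ 1) (i : ℕ → Fin 2) (n : ℕ) :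
    0 ≤ ((i n : ℕ) : ℝ) * (1 - lam) * lam ^ n :=
  mul_nonneg (mul_nonneg (Nat.cast_nonneg _) (by linarith)) (pow_nonneg h0 n)

lemma term_le (h0 : 0 ≤ lam) (h1 : lam ≤ 1) (i : ℕ → Fin 2) (n : ℕ) :
    ((i n : ℕ) : ℝ) * (1 - lam) * lam ^ n ≤ (1 - lam) * lam ^ n := by
  have hi : ((i n : ℕ) : ℝ) ≤ 1 := by
    exact_mod_cast Nat.lt_succ_iff.mp (i n).is_lt
  have hp : (0:ℝ) ≤ lam ^ n := pow_nonneg h0 n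
  have := mul_le_mul_of_nonneg_right
    (mul_le_mul_of_nonneg_right hi (by linarith : (0:ℝ) ≤ 1 - lam)) hp
  simpa using this

lemma summable_term (h0 : 0 ≤ lam) (h1 : lam < 1) (i : ℕ → Fin 2) :
    Summable (fun n => ((i n : ℕ) : ℝ) * (1 - lam) * lam ^ n) :=
  Summable.of_nonneg_of_le (term_nonneg h0 h1.le i) (term_le h0 h1.le i)
    (Summable.mul_left _ (summable_geometric_of_lt_one h0 h1))

lemma piI_nonneg (h0 : 0 ≤ lam) (h1 : lam ≤ 1) (i : ℕ → Fin 2) : 0 ≤ piI lam i :=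
  tsum_nonneg (term_nonneg h0 h1 i)

lemma piI_le_one (h0 : 0 ≤ lam) (h1 : lam < 1) (i : ℕ → Fin 2) : piI lam i ≤ 1 := by
  have h2 : Summable (fun n => (1 - lam) * lam ^ n) :=
    Summable.mul_left _ (summable_geometric_of_lt_one h0 h1)
  have h3 := Summable.tsum_le_tsum (term_le h0 h1.le i) (summable_term h0 h1 i) h2
  refine h3.trans ?_
  rw [tsum_mul_left, tsum_geometric_of_lt_one h0 h1]
  rw [mul_inv_cancel₀ (by linarith)]

lemma piI_split (h0 : 0 ≤ lam) (h1 : lam < 1) (k : ℕ) (i : ℕ → Fin 2) :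
    piI lam i = (∑ m ∈ Finset.range k, ((i m : ℕ) : ℝ) * (1 - lam) * lam ^ m)
      + lam ^ k * piI lam (fun n => i (n + k)) := by
  unfold piI
  rw [← Summable.sum_add_tsum_nat_add k (summable_term h0 h1 i)]
  congr 1
  rw [← tsum_mul_left]
  congr 1
  funext n
  ring

end Aux

section Digits

/-- Left endpoint of the dyadic interval coded by the first `k` digits `w`. -/
noncomputable def sVal (k : ℕ) (w : ℕ → Fin 2) : ℝ :=
  ∑ m ∈ Finset.range k, ((w m : ℕ) : ℝ) * (1/2) ^ (m + 1)

lemma sVal_succ (k : ℕ) (w : ℕ → Fin 2) :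
    sVal (k + 1) w = sVal k w + ((w k : ℕ) : ℝ) * (1/2) ^ (k + 1) :=
  Finset.sum_range_succ _ _

lemma sVal_int (k : ℕ) (w : ℕ → Fin 2) : ∃ M : ℤ, sVal k w * 2 ^ k = (M : ℝ) := by
  induction k with
  | zero => exact ⟨0, by simp [sVal]⟩
  | succ k ih =>
    obtain ⟨M, hM⟩ := ih
    refine ⟨2 * M + ((w k : ℕ) : ℤ), ?_⟩
    have h : ((1:ℝ)/2) ^ (k+1) * 2 ^ (k+1) = 1 := by
      rw [← mul_pow]; norm_num
    rw [sVal_succ]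
    push_cast
    linear_combination 2 * hM + ((w k : ℕ) : ℝ) * h

lemma fin2_cases (b : Fin 2) : b = 0 ∨ b = 1 := by omega

lemma floor_digit (k : ℕ) (w : ℕ → Fin 2) (x : ℝ)
    (hx : x ∈ Set.Ico (sVal k w) (sVal k w + (1/2) ^ k)) :
    digitSeq x k = w k ↔ x ∈ Set.Ico (sVal (k+1) w) (sVal (k+1) w + (1/2) ^ (k+1)) := by
  obtain ⟨M, hM⟩ := sVal_int k w
  obtain ⟨hx1, hx2⟩ := hx
  have hpow : ((1:ℝ)/2) ^ (k+1) * 2 ^ (k+1) = 1 := by rw [← mul_pow]; norm_num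
  have hpow' : ((1:ℝ)/2) ^ k * 2 ^ (k+1) = 2 := by
    rw [pow_succ, ← mul_assoc, ← mul_pow]; norm_num
  have h2 : (0:ℝ) < 2 ^ (k+1) := by positivity
  have hsM : sVal k w * 2 ^ (k+1) = 2 * (M : ℝ) := by linear_combination 2 * hM
  have key0 : x < sVal k w + (1/2) ^ (k+1) → ⌊x * 2 ^ (k+1)⌋ = 2 * M := by
    intro h
    rw [Int.floor_eq_iff]
    constructor
    · push_cast; nlinarith
    · push_cast; nlinarith
  have key1 : sVal k w + (1/2) ^ (k+1) ≤ x → ⌊x * 2 ^ (k+1)⌋ = 2 * M + 1 := by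
    intro h
    rw [Int.floor_eq_iff]
    constructor
    · push_cast; nlinarith
    · push_cast; nlinarith
  have hhalf : ((1:ℝ)/2) ^ k = 2 * (1/2) ^ (k+1) := by rw [pow_succ]; ring
  have hip : ((1:ℝ)/2) ^ (k+1) = ((2:ℝ) ^ (k+1))⁻¹ := by rw [one_div, inv_pow]
  rcases lt_or_ge x (sVal k w + (1/2) ^ (k+1)) with h | h
  · have hd : digitSeq x k = 0 := by
      simp [digitSeq, key0 h, Int.mul_emod_right]
    rw [hd, sVal_succ]
    rcases fin2_cases (w k) with hw | hw
    · rw [hw]; simp [Set.mem_Ico]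
      exact ⟨hx1, hip ▸ h⟩
    · rw [hw]; simp [Set.mem_Ico]
      intro h1
      rw [← hip] at h1
      linarith
  · have hd : digitSeq x k = 1 := by
      have hm : (2 * M + 1) % 2 = 1 := by omega
      simp [digitSeq, key1 h, hm]
    rw [hd, sVal_succ]
    rcases fin2_cases (w k) with hw | hw
    · rw [hw]; simp [Set.mem_Ico]
      intro _
      exact hip ▸ h
    · rw [hw]; simp [Set.mem_Ico]
      refine ⟨hip ▸ h, ?_⟩
      rw [← hip]
      linarith

end Digits

lemma digit_iff (k : ℕ) (w : ℕ → Fin 2) (x : ℝ) :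
    (x ∈ Set.Ico (0:ℝ) 1 ∧ ∀ m < k, digitSeq x m = w m) ↔
      x ∈ Set.Ico (sVal k w) (sVal k w + (1/2) ^ k) := by
  induction k with
  | zero => simp [sVal]
  | succ k ih =>
    constructor
    · rintro ⟨hx01, hd⟩
      have hk : x ∈ Set.Ico (sVal k w) (sVal k w + (1/2) ^ k) :=
        ih.mp ⟨hx01, fun m hm => hd m (by omega)⟩
      exact (floor_digit k w x hk).mp (hd k (by omega))
    · intro hx
      have hwk1 : ((w k : ℕ) : ℝ) ≤ 1 := by
        exact_mod_cast Nat.lt_succ_iff.mp (w k).is_lt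
      have hwk0 : (0:ℝ) ≤ ((w k : ℕ) : ℝ) := Nat.cast_nonneg _
      have hhalf : ((1:ℝ)/2) ^ k = 2 * (1/2) ^ (k+1) := by rw [pow_succ]; ring
      have hp : (0:ℝ) < (1/2:ℝ) ^ (k+1) := by positivity
      have hk : x ∈ Set.Ico (sVal k w) (sVal k w + (1/2) ^ k) := by
        obtain ⟨h1, h2⟩ := hx
        rw [sVal_succ] at h1 h2
        constructor
        · nlinarith
        · nlinarith
      obtain ⟨h01, hdk⟩ := ih.mpr hk
      refine ⟨h01, fun m hm => ?_⟩
      rcases Nat.lt_succ_iff_lt_or_eq.mp hm with hc | hc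
      · exact hdk m hc
      · simpa [hc] using (floor_digit k w x hk).mpr hx

lemma measurable_digitSeq : Measurable digitSeq := by
  refine measurable_pi_lambda _ fun n => ?_
  have : (fun x : ℝ => digitSeq x n) =
      (fun z : ℤ => if z % 2 = 1 then (1 : Fin 2) else 0) ∘ fun x : ℝ => ⌊x * 2 ^ (n+1)⌋ := rfl
  rw [this]
  exact (measurable_of_countable _).comp ((measurable_mul_const _).floor)

lemma measurable_cyl (k : ℕ) (w : ℕ → Fin 2) :
    MeasurableSet {i : ℕ → Fin 2 | ∀ m < k, i m = w m} := by
  have : {i : ℕ → Fin 2 | ∀ m < k, i m = w m} =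
      ⋂ m ∈ Set.Iio k, (fun i : ℕ → Fin 2 => i m) ⁻¹' {w m} := by
    ext i; simp
  rw [this]
  exact MeasurableSet.biInter (Set.to_countable _)
    (fun m _ => (measurable_pi_apply m) (measurableSet_singleton _))

lemma bern_cyl (k : ℕ) (w : ℕ → Fin 2) :
    bern {i | ∀ m < k, i m = w m} = ENNReal.ofReal ((1/2) ^ k) := by
  rw [bern, Measure.map_apply measurable_digitSeq (measurable_cyl k w),
    Measure.restrict_apply (measurable_digitSeq (measurable_cyl k w))]
  have : digitSeq ⁻¹' {i | ∀ m < k, i m = w m} ∩ Set.Ico 0 1 =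
      Set.Ico (sVal k w) (sVal k w + (1/2) ^ k) := by
    ext x
    simp only [Set.mem_inter_iff, Set.mem_preimage, Set.mem_setOf_eq]
    rw [and_comm]
    exact digit_iff k w x
  rw [this, Real.volume_Ico, add_sub_cancel_left]

lemma measurable_piI {lam : ℝ} (h0 : 0 ≤ lam) (h1 : lam < 1) : Measurable (piI lam) := by
  apply measurable_of_tendsto_metrizable
    (f := fun K (i : ℕ → Fin 2) => ∑ m ∈ Finset.range K, ((i m : ℕ) : ℝ) * (1 - lam) * lam ^ m)
  · intro K
    apply Finset.measurable_sum
    intro m _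
    exact (measurable_of_countable
      (fun b : Fin 2 => ((b : ℕ) : ℝ) * (1 - lam) * lam ^ m)).comp (measurable_pi_apply m)
  · rw [tendsto_pi_nhds]
    intro i
    exact (summable_term h0 h1 i).hasSum.tendsto_sum_nat

lemma count_bound (lam ε C₁ : ℝ) (hl2 : 1/2 < lam) (hl1 : lam < 1)
    (hε : ε ∈ Set.Ioo (0:ℝ) 1) (hC₁ : 0 < C₁)
    (hfrost : ∀ x ∈ Set.Icc (0 : ℝ) 1, ∀ r : ℝ, 0 < r →
      nuLam lam (Set.Icc (x - r) (x + r)) ≤ ENNReal.ofReal (C₁ * r ^ (1 - ε)))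
    (ρ : ℝ) (hρ : 0 < ρ) (x : ℝ) (hx : x ∈ Set.Icc (0:ℝ) 1) (k : ℕ)
    (S : Finset (Fin k → Fin 2))
    (hS : ∀ w ∈ S,
      (Set.Icc (∑ m : Fin k, ((w m : ℕ) : ℝ) * (1 - lam) * lam ^ (m : ℕ))
          ((∑ m : Fin k, ((w m : ℕ) : ℝ) * (1 - lam) * lam ^ (m : ℕ)) + lam ^ k) ∩
        Set.Icc (x - ρ * lam ^ k) (x + ρ * lam ^ k)).Nonempty) :
    (S.card : ℝ) ≤ (C₁ * (1 + ρ) ^ (1 - ε)) * 2 ^ k * lam ^ ((k : ℝ) * (1 - ε)) := by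
  have h0 : (0:ℝ) ≤ lam := by linarith
  have hlamk : (0:ℝ) < lam ^ k := pow_pos (by linarith) k
  set r : ℝ := (1 + ρ) * lam ^ k with hr
  have hrpos : 0 < r := mul_pos (by linarith) hlamk
  set E : (Fin k → Fin 2) → (ℕ → Fin 2) := fun w n => if h : n < k then w ⟨n, h⟩ else 0 with hE
  set Cyl : (Fin k → Fin 2) → Set (ℕ → Fin 2) := fun w => {i | ∀ m < k, i m = E w m} with hCyl
  have hmaps : ∀ w ∈ S, Cyl w ⊆ piI lam ⁻¹' (Set.Icc (x - r) (x + r)) := by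
    intro w hw i hi
    obtain ⟨z, ⟨hz1, hz2⟩, hz3, hz4⟩ := hS w hw
    have hsum : (∑ m : Fin k, ((w m : ℕ) : ℝ) * (1 - lam) * lam ^ (m : ℕ))
        = ∑ m ∈ Finset.range k, ((i m : ℕ) : ℝ) * (1 - lam) * lam ^ m := by
      rw [← Fin.sum_univ_eq_sum_range (fun m => ((i m : ℕ) : ℝ) * (1 - lam) * lam ^ m) k]
      refine Finset.sum_congr rfl fun m _ => ?_
      have hiw : i (m : ℕ) = w m := by
        rw [hi (m : ℕ) m.isLt, hE]
        simp [m.isLt]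
      rw [hiw]
    have hsplit := piI_split h0 hl1 k i
    have hpos := piI_nonneg h0 hl1.le (fun n => i (n + k))
    have hle1 := piI_le_one h0 hl1 (fun n => i (n + k))
    rw [← hsum] at hsplit
    have hA1 : (∑ m : Fin k, ((w m : ℕ) : ℝ) * (1 - lam) * lam ^ (m : ℕ)) ≤ piI lam i := by
      nlinarith
    have hA2 : piI lam i
        ≤ (∑ m : Fin k, ((w m : ℕ) : ℝ) * (1 - lam) * lam ^ (m : ℕ)) + lam ^ k := by
      nlinarith
    simp only [Set.mem_preimage, Set.mem_Icc, hr]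
    constructor <;> nlinarith
  have hdisj : (↑S : Set (Fin k → Fin 2)).PairwiseDisjoint Cyl := by
    intro w1 _ w2 _ hne
    refine Set.disjoint_left.mpr fun i h1 h2 => hne ?_
    funext m
    have e1 := h1 (m : ℕ) m.isLt
    have e2 := h2 (m : ℕ) m.isLt
    have e3 := e1.symm.trans e2
    simpa [hE, m.isLt] using e3
  have big : (S.card : ENNReal) * ENNReal.ofReal ((1/2) ^ k)
      ≤ ENNReal.ofReal (C₁ * r ^ (1 - ε)) := by
    calc (S.card : ENNReal) * ENNReal.ofReal ((1/2) ^ k)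
        = ∑ w ∈ S, bern (Cyl w) := by
          rw [Finset.sum_congr rfl fun w _ => bern_cyl k (E w)]
          simp [Finset.sum_const, nsmul_eq_mul]
      _ = bern (⋃ w ∈ S, Cyl w) :=
          (measure_biUnion_finset hdisj fun w _ => measurable_cyl k (E w)).symm
      _ ≤ bern (piI lam ⁻¹' Set.Icc (x - r) (x + r)) :=
          measure_mono (Set.iUnion₂_subset hmaps)
      _ = nuLam lam (Set.Icc (x - r) (x + r)) := by
          rw [nuLam, Measure.map_apply (measurable_piI h0 hl1) measurableSet_Icc]
      _ ≤ _ := hfrost x hx r hrpos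
  have hrpow : (0:ℝ) ≤ C₁ * r ^ (1 - ε) :=
    mul_nonneg hC₁.le (Real.rpow_nonneg hrpos.le _)
  have hreal : (S.card : ℝ) * (1/2) ^ k ≤ C₁ * r ^ (1 - ε) := by
    rw [show ((S.card : ENNReal)) = ENNReal.ofReal ((S.card : ℝ)) from
        (ENNReal.ofReal_natCast _).symm,
      ← ENNReal.ofReal_mul (Nat.cast_nonneg _)] at big
    exact (ENNReal.ofReal_le_ofReal_iff hrpow).mp big
  have hrw : r ^ (1 - ε) = (1 + ρ) ^ (1 - ε) * lam ^ ((k : ℝ) * (1 - ε)) := by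
    rw [hr, Real.mul_rpow (by linarith) hlamk.le, ← Real.rpow_natCast lam k,
      ← Real.rpow_mul h0]
  have hhalf : ((1:ℝ)/2) ^ k * 2 ^ k = 1 := by rw [← mul_pow]; norm_num
  have h2k : (0:ℝ) < (2:ℝ) ^ k := by positivity
  calc (S.card : ℝ) = ((S.card : ℝ) * (1/2) ^ k) * 2 ^ k := by
        rw [mul_assoc, hhalf, mul_one]
    _ ≤ (C₁ * r ^ (1 - ε)) * 2 ^ k := mul_le_mul_of_nonneg_right hreal h2k.le
    _ = (C₁ * (1 + ρ) ^ (1 - ε)) * 2 ^ k * lam ^ ((k : ℝ) * (1 - ε)) := by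
        rw [hrw]; ring

theorem statement2 (lam ε C₁ : ℝ) (hlam : lam ∈ Set.Ioo (1 / 2 : ℝ) 1)
    (hε : ε ∈ Set.Ioo (0 : ℝ) 1) (hC₁ : 0 < C₁)
    (hfrost : ∀ x ∈ Set.Icc (0 : ℝ) 1, ∀ r : ℝ, 0 < r →
      nuLam lam (Set.Icc (x - r) (x + r)) ≤ ENNReal.ofReal (C₁ * r ^ (1 - ε))) :
    ∀ ρ : ℝ, 0 < ρ → ∃ C : ℝ, 0 < C ∧ ∀ x ∈ Set.Icc (0 : ℝ) 1, ∀ k : ℕ,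
      (Nat.card {w : Fin k → Fin 2 //
          (Set.Icc (∑ m : Fin k, ((w m : ℕ) : ℝ) * (1 - lam) * lam ^ (m : ℕ))
              ((∑ m : Fin k, ((w m : ℕ) : ℝ) * (1 - lam) * lam ^ (m : ℕ)) + lam ^ k) ∩
            Set.Icc (x - ρ * lam ^ k) (x + ρ * lam ^ k)).Nonempty} : ℝ) ≤
        C * 2 ^ k * lam ^ ((k : ℝ) * (1 - ε)) := by
  intro ρ hρ
  have hC : 0 < C₁ * (1 + ρ) ^ (1 - ε) :=
    mul_pos hC₁ (Real.rpow_pos_of_pos (by linarith) _)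
  refine ⟨C₁ * (1 + ρ) ^ (1 - ε), hC, fun x hx k => ?_⟩
  classical
  rw [Nat.card_eq_fintype_card, Fintype.card_subtype]
  exact count_bound lam ε C₁ hlam.1 hlam.2 hε hC₁ hfrost ρ hρ x hx k _
    (fun w hw => (Finset.mem_filter.mp hw).2)
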